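/- arXiv:2209.01736 — 2 statements merged into one kernel-verified Lean document; each statement's English description precedes it below -/
import Mathlib

section
/- Let Δt > 0 and g ∈ ℝ. Let X : ℝ² → ℝ² be a ℤ²-equivariant C¹ diffeomorphism with everywhere positive Jacobian determinant δ(x) = det DX(x). Let ρⁿ : ℝ² → ℝ be C² and ℤ²-periodic, and ρⁿ⁻¹ : ℝ² → ℝ be continuous and ℤ²-periodic, satisfying the modified characteristic scheme pointwise: ρⁿ(x) − ρⁿ⁻¹(X(x)) δ(x) = Δt ( Δρⁿ(x) + g ρⁿ(x)(1 − ρⁿ⁻¹(x)) ) for all x ∈ ℝ², where Δ denotes the Laplacian. Then the scheme conserves mass: ∫_Q ρⁿ(x) dx = ∫_Q ρⁿ⁻¹(x) dx + Δt ∫_Q g ρⁿ(x)(1 − ρⁿ⁻¹(x)) dx, where Q = [0,1]². -/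
open MeasureTheory

noncomputable section

abbrev E2 : Type := EuclideanSpace ℝ (Fin 2)

/-- The unit fundamental domain `Q = [0,1]²`. -/
def Q : Set E2 := {x | ∀ i, x i ∈ Set.Icc (0:ℝ) 1}

/-- The vector in `ℝ²` with integer coordinates `k`. -/
def intVec (k : Fin 2 → ℤ) : E2 := WithLp.toLp 2 (fun i => (k i : ℝ))

/-- The Laplacian `Δf = ∂₁₁ f + ∂₂₂ f` on `ℝ²`. -/
def lap (f : E2 → ℝ) (x : E2) : ℝ :=
  ∑ i, fderiv ℝ (fun y => fderiv ℝ f y (EuclideanSpace.single i (1:ℝ))) x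
    (EuclideanSpace.single i (1:ℝ))

/-! ### Auxiliary material -/

/-- The identity continuous linear equivalence between `E2` and `Fin 2 → ℝ`. -/
abbrev eE : E2 ≃L[ℝ] (Fin 2 → ℝ) := EuclideanSpace.equiv (Fin 2) ℝ

lemma hQ_eq : Q = ⇑eE ⁻¹' (Set.Icc 0 1) := by
  ext x; simp [Q, Set.mem_Icc, Pi.le_def, forall_and]

lemma hQ_compact : IsCompact Q := by
  rw [hQ_eq]
  exact eE.toHomeomorph.isCompact_preimage.mpr isCompact_Icc

lemma hQ_meas : MeasurableSet Q :=
  hQ_compact.isClosed.measurableSet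

lemma eE_symm_single (i : Fin 2) :
    eE.symm (Pi.single i (1:ℝ)) = intVec (Pi.single i 1) := by
  show (EuclideanSpace.single i (1:ℝ)) = _
  ext j
  rw [EuclideanSpace.single_apply]
  simp [intVec, Pi.single_apply, apply_ite]

/-- The derivative of a `ℤ²`-periodic function is `ℤ²`-periodic. -/
lemma fderiv_periodic (ρ : E2 → ℝ) (hρ : Differentiable ℝ ρ)
    (hper : ∀ (x : E2) (k : Fin 2 → ℤ), ρ (x + intVec k) = ρ x)
    (x : E2) (k : Fin 2 → ℤ) : fderiv ℝ ρ (x + intVec k) = fderiv ℝ ρ x := by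
  have h1 : HasFDerivAt (fun y => ρ (y + intVec k)) (fderiv ℝ ρ (x + intVec k)) x := by
    have := (hρ (x + intVec k)).hasFDerivAt.comp x ((hasFDerivAt_id x).add_const (intVec k))
    exact this
  have h2 : (fun y => ρ (y + intVec k)) = ρ := funext fun y => hper y k
  rw [h2] at h1
  exact h1.fderiv.symm

lemma insert_one_eq (i : Fin 2) (x : Fin 1 → ℝ) :
    Fin.insertNth (α := fun _ : Fin 2 => ℝ) i 1 x
      = Fin.insertNth (α := fun _ : Fin 2 => ℝ) i 0 x + Pi.single i 1 := by
  funext j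
  refine Fin.succAboveCases i ?_ ?_ j
  · simp
  · intro j'
    simp [Pi.single_eq_of_ne (Fin.succAbove_ne i j')]

/-- The integral of the Laplacian of a `ℤ²`-periodic `C²` function over `Q` vanishes. -/
lemma lap_integral_zero (ρ : E2 → ℝ) (hρ : ContDiff ℝ 2 ρ)
    (hper : ∀ (x : E2) (k : Fin 2 → ℤ), ρ (x + intVec k) = ρ x) :
    ∫ x in Q, lap ρ x = 0 := by
  have hρ' : ContDiff ℝ ((1:ℕ∞) + 1) ρ := by exact_mod_cast hρ
  have hD : ContDiff ℝ 1 (fderiv ℝ ρ) := (contDiff_succ_iff_fderiv.mp hρ').2.2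
  have hρdiff : Differentiable ℝ ρ := (contDiff_succ_iff_fderiv.mp hρ').1
  set g : Fin 2 → E2 → ℝ :=
    fun i z => fderiv ℝ ρ z (EuclideanSpace.single i (1:ℝ)) with hgdef
  have hg : ∀ i, ContDiff ℝ 1 (g i) := fun i =>
    (ContinuousLinearMap.apply ℝ ℝ (EuclideanSpace.single i (1:ℝ))).contDiff.comp hD
  have hgper : ∀ i (x : E2) (k : Fin 2 → ℤ), g i (x + intVec k) = g i x := by
    intro i x k
    simp only [hgdef, fderiv_periodic ρ hρdiff hper x k]
  set F : Fin 2 → (Fin 2 → ℝ) → ℝ := fun i y => g i (eE.symm y) with hFdef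
  set F' : Fin 2 → (Fin 2 → ℝ) → (Fin 2 → ℝ) →L[ℝ] ℝ :=
    fun i y => (fderiv ℝ (g i) (eE.symm y)).comp
      (eE.symm : (Fin 2 → ℝ) →L[ℝ] E2) with hF'def
  have hFd : ∀ (y : Fin 2 → ℝ) (i : Fin 2), HasFDerivAt (F i) (F' i y) y := by
    intro y i
    exact (((hg i).differentiable one_ne_zero (eE.symm y)).hasFDerivAt).comp y eE.symm.hasFDerivAt
  have hFc : ∀ i, Continuous (F i) := by
    intro i
    exact Continuous.comp ((hg i).continuous) eE.symm.continuous
  have hF'cont : ∀ i, Continuous fun y => F' i y (Pi.single i (1:ℝ)) := by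
    intro i
    have h1 : Continuous (fderiv ℝ (g i)) := (hg i).continuous_fderiv one_ne_zero
    have h2 : Continuous fun y : Fin 2 → ℝ =>
        fderiv ℝ (g i) (eE.symm y) (eE.symm (Pi.single i (1:ℝ))) :=
      (ContinuousLinearMap.apply ℝ ℝ (eE.symm (Pi.single i (1:ℝ)))).continuous.comp
        (h1.comp eE.symm.continuous)
    exact h2
  have hdiv := integral_divergence_of_hasFDerivAt_off_countable' (n := 1) (0 : Fin 2 → ℝ) 1
    (fun i => zero_le_one) F F' ∅ Set.countable_empty
    (fun i => (hFc i).continuousOn)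
    (fun x _ i => hFd x i)
    (by
      refine ContinuousOn.integrableOn_compact isCompact_Icc ?_
      exact (continuous_finset_sum _ fun i _ => hF'cont i).continuousOn)
  have hzero : (∫ x in Set.Icc (0 : Fin 2 → ℝ) 1, ∑ i, F' i x (Pi.single i (1:ℝ))) = 0 := by
    rw [hdiv]
    refine Finset.sum_eq_zero fun i _ => sub_eq_zero.mpr ?_
    refine setIntegral_congr_fun measurableSet_Icc fun x _ => ?_
    simp only [Pi.one_apply, Pi.zero_apply, hFdef]
    rw [insert_one_eq, map_add, eE_symm_single, hgper]
  -- transfer to `Q`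
  have himg : ⇑((MeasurableEquiv.toLp 2 (Fin 2 → ℝ)).symm) '' Q = Set.Icc 0 1 := by
    rw [MeasurableEquiv.image_eq_preimage_symm]
    ext y
    constructor
    · intro hy
      rw [Set.mem_Icc]
      exact ⟨fun j => (hy j).1, fun j => (hy j).2⟩
    · intro hy j
      rw [Set.mem_Icc] at hy
      exact ⟨hy.1 j, hy.2 j⟩
  have htrans := (EuclideanSpace.volume_preserving_symm_measurableEquiv_toLp (Fin 2)).setIntegral_image_emb
    (MeasurableEquiv.measurableEmbedding _) (fun y => ∑ i, F' i y (Pi.single i (1:ℝ))) Q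
  rw [himg] at htrans
  have hpt : ∀ x : E2,
      (∑ i, F' i ((MeasurableEquiv.toLp 2 (Fin 2 → ℝ)).symm x) (Pi.single i (1:ℝ)))
      = lap ρ x := by
    intro x
    unfold lap
    refine Finset.sum_congr rfl fun i _ => ?_
    show fderiv ℝ (g i) (eE.symm (eE x)) (eE.symm (Pi.single i (1:ℝ))) = _
    rw [eE.symm_apply_apply]
    rfl
  calc ∫ x in Q, lap ρ x
      = ∫ x in Q, ∑ i, F' i ((MeasurableEquiv.toLp 2 (Fin 2 → ℝ)).symm x) (Pi.single i (1:ℝ)) :=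
        integral_congr_ae (Filter.Eventually.of_forall fun x => (hpt x).symm)
    _ = ∫ y in Set.Icc (0 : Fin 2 → ℝ) 1, ∑ i, F' i y (Pi.single i (1:ℝ)) := htrans.symm
    _ = 0 := hzero

/-! ### Change of variables over the fundamental domain -/

abbrev bE : Module.Basis (Fin 2) ℝ E2 := (EuclideanSpace.basisFun (Fin 2) ℝ).toBasis

lemma mem_span_iff (v : E2) :
    v ∈ Submodule.span ℤ (Set.range ⇑bE) ↔ ∃ k, v = intVec k := by
  rw [Module.Basis.mem_span_iff_repr_mem]
  constructor
  · intro h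
    choose k hk using h
    refine ⟨k, PiLp.ext fun i => ?_⟩
    have h := hk i
    simp only [OrthonormalBasis.coe_toBasis_repr_apply, EuclideanSpace.basisFun_repr,
      algebraMap_int_eq, eq_intCast] at h
    exact h.symm
  · rintro ⟨k, rfl⟩ i
    exact ⟨k i, by simp [intVec, OrthonormalBasis.coe_toBasis_repr_apply,
      EuclideanSpace.basisFun_repr]⟩

lemma hyperplane_null (i : Fin 2) : volume {x : E2 | x i = 1} = 0 := by
  have hset : {x : E2 | x i = 1}
      = ⇑((MeasurableEquiv.toLp 2 (Fin 2 → ℝ)).symm) ⁻¹' {y : Fin 2 → ℝ | y i = 1} := rfl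
  have hm : MeasurableSet {y : Fin 2 → ℝ | y i = 1} :=
    measurableSet_eq_fun (measurable_pi_apply i) measurable_const
  have hpi : volume {y : Fin 2 → ℝ | y i = 1} = 0 := by
    have hEq : {y : Fin 2 → ℝ | y i = 1}
        = Set.pi Set.univ (Function.update (fun _ => Set.univ) i {1}) := by
      ext y
      simp only [Set.mem_setOf_eq, Set.mem_pi, Set.mem_univ, forall_true_left,
        Function.update_apply]
      constructor
      · intro h j
        by_cases hj : j = i
        · subst hj; simp [h]
        · simp [hj]
      · intro h
        simpa using h i
    rw [hEq, volume_pi_pi]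
    refine Finset.prod_eq_zero (Finset.mem_univ i) ?_
    simp
  rw [hset, (EuclideanSpace.volume_preserving_symm_measurableEquiv_toLp (Fin 2)).measure_preimage
    hm.nullMeasurableSet, hpi]

lemma fd_eq : ZSpan.fundamentalDomain bE = {x : E2 | ∀ i, x i ∈ Set.Ico (0:ℝ) 1} := by
  ext x
  simp [ZSpan.fundamentalDomain, OrthonormalBasis.coe_toBasis_repr_apply,
    EuclideanSpace.basisFun_repr]

lemma Q_ae_FD : Q =ᵐ[volume] ZSpan.fundamentalDomain bE := by
  rw [MeasureTheory.ae_eq_set]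
  constructor
  · refine measure_mono_null ?_ (measure_iUnion_null fun i => hyperplane_null i)
    rintro x ⟨hxQ, hxF⟩
    rw [fd_eq] at hxF
    simp only [Set.mem_setOf_eq, Set.mem_Ico, not_forall, not_and, not_lt] at hxF
    obtain ⟨i, hi⟩ := hxF
    have h1 := (hxQ i).1
    have h2 := (hxQ i).2
    exact Set.mem_iUnion.mpr ⟨i, le_antisymm h2 (hi h1)⟩
  · have : ZSpan.fundamentalDomain bE \ Q = ∅ := by
      rw [Set.diff_eq_empty, fd_eq]
      intro x hx i
      exact ⟨(hx i).1, le_of_lt (hx i).2⟩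
    rw [this]
    exact measure_empty

instance : Countable (Submodule.span ℤ (Set.range ⇑bE)).toAddSubgroup := by
  have hsurj : Function.Surjective (fun k : Fin 2 → ℤ =>
      (⟨intVec k, (Submodule.mem_toAddSubgroup _).mpr ((mem_span_iff _).mpr ⟨k, rfl⟩)⟩ :
        (Submodule.span ℤ (Set.range ⇑bE)).toAddSubgroup)) := by
    rintro ⟨v, hv⟩
    obtain ⟨k, rfl⟩ := (mem_span_iff v).mp ((Submodule.mem_toAddSubgroup _).mp hv)
    exact ⟨k, rfl⟩
  exact hsurj.countable

lemma change_of_variables (X : E2 → E2) (f : E2 → ℝ)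
    (hX : ContDiff ℝ 1 X) (hXbij : Function.Bijective X)
    (hXequiv : ∀ (x : E2) (k : Fin 2 → ℤ), X (x + intVec k) = X x + intVec k)
    (hδpos : ∀ x : E2, 0 < (fderiv ℝ X x).det)
    (hf : Continuous f) (hfper : ∀ (x : E2) (k : Fin 2 → ℤ), f (x + intVec k) = f x) :
    ∫ x in Q, f (X x) * (fderiv ℝ X x).det = ∫ x in Q, f x := by
  set Q' := ZSpan.fundamentalDomain bE with hQ'def
  have hQ'meas : MeasurableSet Q' := ZSpan.fundamentalDomain_measurableSet bE
  set Y : E2 → E2 := ⇑(Equiv.ofBijective X hXbij).symm with hYdef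
  have hYX : ∀ z, X (Y z) = z := fun z => (Equiv.ofBijective X hXbij).apply_symm_apply z
  have hXY : ∀ w, Y (X w) = w := fun w => (Equiv.ofBijective X hXbij).symm_apply_apply w
  have hYequiv : ∀ (z : E2) (k : Fin 2 → ℤ), Y (z + intVec k) = Y z + intVec k := by
    intro z k
    apply hXbij.injective
    rw [hXequiv, hYX, hYX]
  have himage : X '' Q' = Y ⁻¹' Q' := by
    ext z
    constructor
    · rintro ⟨w, hw, rfl⟩
      rwa [Set.mem_preimage, hXY]
    · intro hz
      exact ⟨Y z, hz, hYX z⟩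
  have hemb : MeasurableEmbedding X := hX.continuous.measurableEmbedding hXbij.injective
  have hXQ'meas : MeasurableSet (X '' Q') := hemb.measurableSet_image.2 hQ'meas
  have FD1 : IsAddFundamentalDomain (Submodule.span ℤ (Set.range ⇑bE)).toAddSubgroup Q' volume :=
    ZSpan.isAddFundamentalDomain' bE volume
  have key : ∀ (v : E2), v ∈ Submodule.span ℤ (Set.range ⇑bE) → ∀ z : E2,
      (v + z ∈ X '' Q' ↔ v + Y z ∈ Q') := by
    intro v hv z
    obtain ⟨k, rfl⟩ := (mem_span_iff v).mp hv
    rw [himage, Set.mem_preimage, add_comm, hYequiv, add_comm]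
  have FD2 : IsAddFundamentalDomain (Submodule.span ℤ (Set.range ⇑bE)).toAddSubgroup
      (X '' Q') volume := by
    refine IsAddFundamentalDomain.mk' hXQ'meas.nullMeasurableSet fun z => ?_
    obtain ⟨g, hg, huniq⟩ := ZSpan.exist_unique_vadd_mem_fundamentalDomain bE (Y z)
    refine ⟨⟨g.1, (Submodule.mem_toAddSubgroup _).mpr g.2⟩, (key g.1 g.2 z).mpr hg, ?_⟩
    rintro ⟨v, hv⟩ h
    have h2 := huniq ⟨v, (Submodule.mem_toAddSubgroup _).mp hv⟩
      ((key v ((Submodule.mem_toAddSubgroup _).mp hv) z).mp h)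
    exact Subtype.ext (congrArg Subtype.val h2)
  have hinv : ∀ (g : (Submodule.span ℤ (Set.range ⇑bE)).toAddSubgroup) (x : E2),
      f (g +ᵥ x) = f x := by
    rintro ⟨v, hv⟩ x
    obtain ⟨k, rfl⟩ := (mem_span_iff v).mp ((Submodule.mem_toAddSubgroup _).mp hv)
    show f (intVec k + x) = f x
    rw [add_comm, hfper]
  have hQae : Q =ᵐ[volume] Q' := Q_ae_FD
  calc ∫ x in Q, f (X x) * (fderiv ℝ X x).det
      = ∫ x in Q', f (X x) * (fderiv ℝ X x).det := setIntegral_congr_set hQae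
    _ = ∫ x in Q', |(fderiv ℝ X x).det| • f (X x) := by
        refine setIntegral_congr_fun hQ'meas fun x _ => ?_
        rw [abs_of_pos (hδpos x), smul_eq_mul, mul_comm]
    _ = ∫ z in X '' Q', f z := by
        rw [integral_image_eq_integral_abs_det_fderiv_smul volume hQ'meas
          (fun x _ => ((hX.differentiable one_ne_zero x).hasFDerivAt).hasFDerivWithinAt)
          hXbij.injective.injOn f]
    _ = ∫ x in Q', f x := FD2.setIntegral_eq FD1 hinv
    _ = ∫ x in Q, f x := (setIntegral_congr_set hQae).symm

/-- Mass balance for the modified characteristic scheme: if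
`ρⁿ(x) − ρⁿ⁻¹(X(x)) δ(x) = Δt (Δρⁿ(x) + g ρⁿ(x)(1 − ρⁿ⁻¹(x)))` pointwise, with `X` a
`ℤ²`-equivariant `C¹` diffeomorphism with positive Jacobian determinant `δ`, and `ρⁿ, ρⁿ⁻¹`
`ℤ²`-periodic, then `∫_Q ρⁿ = ∫_Q ρⁿ⁻¹ + Δt ∫_Q g ρⁿ (1 − ρⁿ⁻¹)`. -/
theorem mass_balance_modified_characteristic_scheme
    (Δt g : ℝ) (hΔt : 0 < Δt)
    (X : E2 → E2) (ρn ρn1 : E2 → ℝ)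
    (hX : ContDiff ℝ 1 X) (hXbij : Function.Bijective X)
    (hXequiv : ∀ (x : E2) (k : Fin 2 → ℤ), X (x + intVec k) = X x + intVec k)
    (hδpos : ∀ x : E2, 0 < (fderiv ℝ X x).det)
    (hρn : ContDiff ℝ 2 ρn)
    (hρnper : ∀ (x : E2) (k : Fin 2 → ℤ), ρn (x + intVec k) = ρn x)
    (hρn1 : Continuous ρn1)
    (hρn1per : ∀ (x : E2) (k : Fin 2 → ℤ), ρn1 (x + intVec k) = ρn1 x)
    (hscheme : ∀ x : E2,
      ρn x - ρn1 (X x) * (fderiv ℝ X x).det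
        = Δt * (lap ρn x + g * ρn x * (1 - ρn1 x))) :
    ∫ x in Q, ρn x = (∫ x in Q, ρn1 x) + Δt * ∫ x in Q, g * ρn x * (1 - ρn1 x) := by
  have hδcont : Continuous fun x : E2 => (fderiv ℝ X x).det :=
    ContinuousLinearMap.continuous_det.comp (hX.continuous_fderiv one_ne_zero)
  have hlapcont : Continuous (lap ρn) := by
    have hρ' : ContDiff ℝ ((1:ℕ∞) + 1) ρn := by exact_mod_cast hρn
    have hD : ContDiff ℝ 1 (fderiv ℝ ρn) := (contDiff_succ_iff_fderiv.mp hρ').2.2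
    unfold lap
    refine continuous_finset_sum _ fun i _ => ?_
    have hg : ContDiff ℝ 1 fun z => fderiv ℝ ρn z (EuclideanSpace.single i (1:ℝ)) :=
      (ContinuousLinearMap.apply ℝ ℝ (EuclideanSpace.single i (1:ℝ))).contDiff.comp hD
    exact (ContinuousLinearMap.apply ℝ ℝ (EuclideanSpace.single i (1:ℝ))).continuous.comp
      (hg.continuous_fderiv one_ne_zero)
  have h1 : IntegrableOn ρn Q :=
    ContinuousOn.integrableOn_compact hQ_compact hρn.continuous.continuousOn
  have h2 : IntegrableOn (fun x => ρn1 (X x) * (fderiv ℝ X x).det) Q :=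
    ContinuousOn.integrableOn_compact hQ_compact
      (((hρn1.comp hX.continuous).mul hδcont)).continuousOn
  have h3 : IntegrableOn (lap ρn) Q :=
    ContinuousOn.integrableOn_compact hQ_compact hlapcont.continuousOn
  have h4 : IntegrableOn (fun x => g * ρn x * (1 - ρn1 x)) Q :=
    ContinuousOn.integrableOn_compact hQ_compact
      (((continuous_const.mul hρn.continuous).mul
        (continuous_const.sub hρn1))).continuousOn
  have key : (∫ x in Q, ρn x) - ∫ x in Q, ρn1 (X x) * (fderiv ℝ X x).det
      = Δt * ((∫ x in Q, lap ρn x) + ∫ x in Q, g * ρn x * (1 - ρn1 x)) := by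
    rw [← integral_sub h1 h2, ← integral_add h3 h4, ← MeasureTheory.integral_const_mul]
    exact integral_congr_ae (Filter.Eventually.of_forall fun x => hscheme x)
  rw [lap_integral_zero ρn hρn hρnper, zero_add,
    change_of_variables X ρn1 hX hXbij hXequiv hδpos hρn1 hρn1per] at key
  linarith [key]
end
end

section
/- Let ρ : ℝ² × ℝ → ℝ be differentiable at (x, t) and p : ℝ² → ℝ² be differentiable at x. Then the function s ↦ ρ(x − s p(x), t − s) · det(I₂ − s Dp(x)) is differentiable at s = 0 with derivative equal to −( ∂_t ρ(x, t) + p(x)·∇ρ(x, t) + ρ(x, t)(div p)(x) ) = −( ∂_t ρ + div(ρ(·,t) p) )(x, t), where Dp(x) is the 2×2 Jacobian matrix of p at x, I₂ the 2×2 identity matrix, and div p = tr(Dp). -/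
noncomputable section

/-- First-order consistency of the modified characteristic approximation: if `ρ` is
differentiable at `(x,t)` and `p` at `x`, then `s ↦ ρ(x − s p(x), t − s) det(I − s Dp(x))`
is differentiable at `s = 0` with derivative
`−(∂_t ρ(x,t) + p(x)·∇ρ(x,t) + ρ(x,t) div p(x))`. -/
theorem characteristic_consistency_derivative
    (ρ : E2 × ℝ → ℝ) (p : E2 → E2) (x : E2) (t : ℝ)
    (hρ : DifferentiableAt ℝ ρ (x, t))
    (hp : DifferentiableAt ℝ p x) :
    HasDerivAt
      (fun s : ℝ => ρ (x - s • p x, t - s) * ((1 : E2 →L[ℝ] E2) - s • fderiv ℝ p x).det)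
      (-(fderiv ℝ ρ (x, t) (0, 1) + fderiv ℝ ρ (x, t) (p x, 0)
          + ρ (x, t) * LinearMap.trace ℝ E2 (fderiv ℝ p x).toLinearMap))
      0 := by
  set A := fderiv ℝ p x with hA
  -- the inner curve
  have h1 : HasDerivAt (fun s : ℝ => x - s • p x) (-(p x)) 0 := by
    simpa using ((hasDerivAt_id (0:ℝ)).smul_const (p x)).const_sub x
  have h2 : HasDerivAt (fun s : ℝ => t - s) (-1 : ℝ) 0 := by
    simpa using (hasDerivAt_id (0:ℝ)).const_sub t
  have hcurve : HasDerivAt (fun s : ℝ => ((x - s • p x, t - s) : E2 × ℝ))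
      ((-(p x), -1) : E2 × ℝ) 0 := h1.prodMk h2
  have hcurve0 : ((x - (0:ℝ) • p x, t - (0:ℝ)) : E2 × ℝ) = (x, t) := by simp
  have hρ' : HasFDerivAt ρ (fderiv ℝ ρ (x, t)) ((x - (0:ℝ) • p x, t - (0:ℝ)) : E2 × ℝ) := by
    rw [hcurve0]; exact hρ.hasFDerivAt
  have hg : HasDerivAt (fun s : ℝ => ρ (x - s • p x, t - s))
      (fderiv ℝ ρ (x, t) ((-(p x), -1) : E2 × ℝ)) 0 :=
    hρ'.comp_hasDerivAt 0 hcurve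
  have hgval : fderiv ℝ ρ (x, t) ((-(p x), -1) : E2 × ℝ)
      = -(fderiv ℝ ρ (x, t) (0, 1) + fderiv ℝ ρ (x, t) (p x, 0)) := by
    have : ((-(p x), -1) : E2 × ℝ) = -(((0 : E2), (1:ℝ)) + ((p x), (0:ℝ))) := by
      simp [Prod.ext_iff]
    rw [this, map_neg, map_add]
  -- the determinant part as an explicit polynomial
  set b := (EuclideanSpace.basisFun (Fin 2) ℝ).toBasis with hb
  set M := LinearMap.toMatrix b b A.toLinearMap with hM
  have key : ∀ s : ℝ, ((1 : E2 →L[ℝ] E2) - s • A).det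
      = 1 - s * (M 0 0 + M 1 1) + s ^ 2 * (M 0 0 * M 1 1 - M 0 1 * M 1 0) := by
    intro s
    have hco : (((1 : E2 →L[ℝ] E2) - s • A).toLinearMap : E2 →ₗ[ℝ] E2)
        = (1 : E2 →ₗ[ℝ] E2) - s • A.toLinearMap := by
      ext v
      simp [ContinuousLinearMap.coe_sub, ContinuousLinearMap.coe_smul]
    rw [ContinuousLinearMap.det, hco, ← LinearMap.det_toMatrix b,
      map_sub, map_smul, ← hM]
    have hone : LinearMap.toMatrix b b (1 : E2 →ₗ[ℝ] E2) = 1 := by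
      simp [LinearMap.toMatrix_one]
    rw [hone, Matrix.det_fin_two]
    simp [Matrix.sub_apply, Matrix.smul_apply, Matrix.one_apply]
    ring
  have htr : LinearMap.trace ℝ E2 A.toLinearMap = M 0 0 + M 1 1 := by
    rw [LinearMap.trace_eq_matrix_trace ℝ b, ← hM, Matrix.trace_fin_two]
  have hdet : HasDerivAt (fun s : ℝ => ((1 : E2 →L[ℝ] E2) - s • A).det)
      (-(M 0 0 + M 1 1)) 0 := by
    have hpoly : HasDerivAt
        (fun s : ℝ => 1 - s * (M 0 0 + M 1 1) + s ^ 2 * (M 0 0 * M 1 1 - M 0 1 * M 1 0))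
        (-(M 0 0 + M 1 1)) 0 := by
      have := (((hasDerivAt_id (0:ℝ)).mul_const (M 0 0 + M 1 1)).const_sub 1).add
        ((hasDerivAt_pow 2 (0:ℝ)).mul_const (M 0 0 * M 1 1 - M 0 1 * M 1 0))
      refine this.congr_deriv ?_
      simp
    have hfun : (fun s : ℝ => ((1 : E2 →L[ℝ] E2) - s • A).det)
        = fun s : ℝ => 1 - s * (M 0 0 + M 1 1) + s ^ 2 * (M 0 0 * M 1 1 - M 0 1 * M 1 0) :=
      funext key
    rw [hfun]; exact hpoly
  -- combine via product rule
  have hmul := hg.mul hdet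
  have hdet0 : ((1 : E2 →L[ℝ] E2) - (0:ℝ) • A).det = 1 := by
    rw [key 0]; ring
  have hρ0 : ρ (x - (0:ℝ) • p x, t - (0:ℝ)) = ρ (x, t) := by rw [hcurve0]
  refine hmul.congr_deriv ?_
  rw [hgval, hdet0, hρ0, htr]
  ring
end
end
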